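/- Delay robustness of the cascaded FCT estimator: suppose ε₂(t) = 0 for all t > T₁ (the perturbation of the second node's regression vanishes in finite time, possibly delayed), Δ₂ is continuous with Δ₂(t) ≥ ε > 0 for t > 0, and θ̂⁽²⁾ solves θ̂⁽²⁾' = γΔ₂(Δ₂θ⁽²⁾ + Δ₂·η(t) − Δ₂θ̂⁽²⁾) where η(t) = 0 for t > T₁. Then with w₂ and the clipped reconstruction as in the DREM-FCT scheme restarted analysis, there exists T₂ > T₁ such that the reconstructed estimate equals θ⁽²⁾ exactly for all t > T₂. -/

import Mathlib

open Real Filter Set Topology intervalIntegral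

/-- Delay robustness of the cascaded FCT estimator: if the perturbation `η` of the
second node's regression vanishes for `t > T₁`, `Δ₂` is continuous with
`Δ₂(t) ≥ ε > 0` for `t > 0`, and `θ̂⁽²⁾' = γΔ₂(Δ₂θ⁽²⁾ + Δ₂η − Δ₂θ̂⁽²⁾)`, then with the
clipped reconstruction `(θ̂⁽²⁾(t) − w_c(t)θ̂⁽²⁾(T₁))/(1 − w_c(t))`,
`w_c(t) = min(e^{−γ∫_{T₁}^t Δ₂²}, 1−μ)`, there exists `T₂ > T₁` such that the
reconstructed estimate equals `θ⁽²⁾` exactly for all `t > T₂`. -/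
theorem stmt15 {q : ℕ} (γ ε μ T₁ : ℝ) (hγ : 0 < γ) (hε : 0 < ε)
    (hμ : μ ∈ Set.Ioo (0:ℝ) 1) (hT₁ : 0 ≤ T₁)
    (Δ₂ : ℝ → ℝ) (hΔ₂ : Continuous Δ₂) (hΔ₂ε : ∀ t : ℝ, 0 < t → ε ≤ Δ₂ t)
    (θ₂ : Fin q → ℝ) (η : ℝ → (Fin q → ℝ)) (hη : ∀ t : ℝ, T₁ < t → η t = 0)
    (θh₂ : ℝ → (Fin q → ℝ))
    (hθh₂ : ∀ t : ℝ, 0 ≤ t →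
      HasDerivAt θh₂ ((γ * Δ₂ t) • (Δ₂ t • θ₂ + Δ₂ t • η t - Δ₂ t • θh₂ t)) t) :
    ∃ T₂ : ℝ, T₁ < T₂ ∧ ∀ t : ℝ, T₂ < t →
      (1 - min (Real.exp (-γ * ∫ s in T₁..t, (Δ₂ s) ^ 2)) (1 - μ))⁻¹ •
        (θh₂ t - min (Real.exp (-γ * ∫ s in T₁..t, (Δ₂ s) ^ 2)) (1 - μ) • θh₂ T₁) =
      θ₂ := by
  obtain ⟨hμ0, hμ1⟩ := hμ
  have hΔc : Continuous fun s => Δ₂ s ^ 2 := hΔ₂.pow 2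
  -- ε ≤ Δ₂ s for all s ≥ 0
  have hΔ₂ε' : ∀ s : ℝ, 0 ≤ s → ε ≤ Δ₂ s := by
    intro s hs
    rcases hs.lt_or_eq with h | h
    · exact hΔ₂ε s h
    · subst h
      have h1 : Tendsto Δ₂ (𝓝[>] (0:ℝ)) (𝓝 (Δ₂ 0)) :=
        (hΔ₂.continuousAt.tendsto).mono_left nhdsWithin_le_nhds
      exact ge_of_tendsto h1 (eventually_nhdsWithin_of_forall fun x hx => hΔ₂ε x hx)
  set V : ℝ → ℝ := fun t => ∫ s in T₁..t, Δ₂ s ^ 2 with hVdef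
  have hV : ∀ t : ℝ, HasDerivAt V (Δ₂ t ^ 2) t := by
    intro t
    exact intervalIntegral.integral_hasDerivAt_right (hΔc.intervalIntegrable _ _)
      (hΔc.stronglyMeasurableAtFilter _ _) hΔc.continuousAt
  have hVT₁ : V T₁ = 0 := intervalIntegral.integral_same
  -- componentwise solution
  have hcomp : ∀ i : Fin q, ∀ t : ℝ, 0 ≤ t →
      HasDerivAt (fun s => θh₂ s i)
        ((γ * Δ₂ t) * (Δ₂ t * θ₂ i + Δ₂ t * η t i - Δ₂ t * θh₂ t i)) t := by
    intro i t ht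
    have := (hasDerivAt_pi.1 (hθh₂ t ht)) i
    simpa using this
  -- g is constant on (T₁, ∞), equal to its limit at T₁
  have key : ∀ i : Fin q, ∀ t : ℝ, T₁ < t →
      Real.exp (γ * V t) * (θh₂ t i - θ₂ i) = θh₂ T₁ i - θ₂ i := by
    intro i t ht
    set g : ℝ → ℝ := fun s => Real.exp (γ * V s) * (θh₂ s i - θ₂ i) with hgdef
    have hg' : ∀ s : ℝ, T₁ < s → HasDerivAt g 0 s := by
      intro s hs
      have hs0 : 0 ≤ s := le_of_lt (lt_of_le_of_lt hT₁ hs)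
      have h1 : HasDerivAt (fun u => Real.exp (γ * V u))
          (Real.exp (γ * V s) * (γ * Δ₂ s ^ 2)) s := ((hV s).const_mul γ).exp
      have h2 : HasDerivAt (fun u => θh₂ u i - θ₂ i)
          ((γ * Δ₂ s) * (Δ₂ s * θ₂ i + Δ₂ s * η s i - Δ₂ s * θh₂ s i)) s :=
        (hcomp i s hs0).sub_const _
      have h3 := h1.mul h2
      have hηs : η s i = 0 := by rw [hη s hs]; rfl
      have : Real.exp (γ * V s) * (γ * Δ₂ s ^ 2) * (θh₂ s i - θ₂ i) +
          Real.exp (γ * V s) * ((γ * Δ₂ s) * (Δ₂ s * θ₂ i + Δ₂ s * η s i - Δ₂ s * θh₂ s i))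
          = 0 := by rw [hηs]; ring
      rw [this] at h3; exact h3
    have hcont : ∀ s : ℝ, 0 ≤ s → ContinuousAt g s := by
      intro s hs
      exact (((hV s).const_mul γ).exp.continuousAt.mul
        (((hasDerivAt_pi.1 (hθh₂ s hs)) i).continuousAt.sub continuousAt_const))
    have hconst : ∀ a : ℝ, a ∈ Set.Ioc T₁ t → g a = g t := by
      intro a ⟨ha1, ha2⟩
      have := constant_of_has_deriv_right_zero (f := g) (a := a) (b := t)
        (fun x hx => (hcont x (le_trans hT₁ (le_trans ha1.le hx.1))).continuousWithinAt)
        (fun x hx => ((hg' x (lt_of_lt_of_le ha1 hx.1)).hasDerivWithinAt))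
      exact (this t ⟨ha2, le_refl t⟩).symm
    have hne : (𝓝[>] T₁).NeBot := nhdsGT_neBot T₁
    have hlim1 : Tendsto g (𝓝[>] T₁) (𝓝 (g T₁)) :=
      ((hcont T₁ hT₁).tendsto).mono_left nhdsWithin_le_nhds
    have hlim2 : Tendsto g (𝓝[>] T₁) (𝓝 (g t)) := by
      have hmem : Set.Ioo T₁ t ∈ 𝓝[>] T₁ := Ioo_mem_nhdsGT_of_mem ⟨le_refl T₁, ht⟩
      have heq : g =ᶠ[𝓝[>] T₁] fun _ => g t :=
        Filter.eventually_of_mem hmem fun a ha => hconst a ⟨ha.1, ha.2.le⟩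
      exact Tendsto.congr' heq.symm tendsto_const_nhds
    have h6 := (tendsto_nhds_unique hlim1 hlim2).symm
    simpa [hgdef, hVT₁] using h6
  refine ⟨T₁ + 1 + abs (Real.log (1 - μ)) / (γ * ε ^ 2), by
    have h0 : 0 ≤ abs (Real.log (1 - μ)) / (γ * ε ^ 2) :=
      div_nonneg (abs_nonneg _) (by positivity)
    linarith, ?_⟩
  intro t ht
  have hT₁t : T₁ < t := by
    have hpos : (0:ℝ) < γ * ε ^ 2 := by positivity
    have h0 : 0 ≤ abs (Real.log (1 - μ)) / (γ * ε ^ 2) :=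
      div_nonneg (abs_nonneg _) hpos.le
    linarith
  -- lower bound on V t
  have hVlb : ε ^ 2 * (t - T₁) ≤ V t := by
    have : ∫ s in T₁..t, (ε ^ 2) ≤ ∫ s in T₁..t, Δ₂ s ^ 2 := by
      apply intervalIntegral.integral_mono_on hT₁t.le
        (intervalIntegrable_const) (hΔc.intervalIntegrable _ _)
      intro x hx
      have hx0 : 0 ≤ x := le_trans hT₁ hx.1
      have := hΔ₂ε' x hx0
      nlinarith [hε]
    simpa [mul_comm] using this
  -- w ≤ 1 - μ
  have hw : Real.exp (-γ * V t) ≤ 1 - μ := by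
    have h1 : |Real.log (1 - μ)| ≤ γ * V t := by
      have h2 : γ * (ε ^ 2 * (t - T₁)) ≤ γ * V t := by nlinarith
      have h3 : |Real.log (1 - μ)| ≤ γ * (ε ^ 2 * (t - T₁)) := by
        have ht' : T₁ + 1 + |Real.log (1 - μ)| / (γ * ε ^ 2) < t := ht
        have hpos : (0:ℝ) < γ * ε ^ 2 := by positivity
        have hd : |Real.log (1 - μ)| =
            (|Real.log (1 - μ)| / (γ * ε ^ 2)) * (γ * ε ^ 2) :=
          (div_mul_cancel₀ _ (ne_of_gt hpos)).symm
        nlinarith [hd, mul_pos hpos (show (0:ℝ) <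
          t - T₁ - 1 - |Real.log (1 - μ)| / (γ * ε ^ 2) by linarith)]
      linarith
    have h4 : Real.log (1 - μ) ≥ -(γ * V t) := by
      have := neg_abs_le (Real.log (1 - μ)); linarith
    calc Real.exp (-γ * V t) = Real.exp (-(γ * V t)) := by ring_nf
      _ ≤ Real.exp (Real.log (1 - μ)) := Real.exp_le_exp.2 h4
      _ = 1 - μ := Real.exp_log (by linarith)
  set w : ℝ := Real.exp (-γ * V t) with hwdef
  have hmin : min (Real.exp (-γ * ∫ s in T₁..t, (Δ₂ s) ^ 2)) (1 - μ) = w :=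
    min_eq_left hw
  have hw1 : w < 1 := lt_of_le_of_lt hw (by linarith)
  have hwV : Real.exp (γ * V t) * w = 1 := by
    rw [hwdef, ← Real.exp_add]; ring_nf; exact Real.exp_zero
  rw [hmin]
  funext i
  have hk := key i t hT₁t
  -- θh₂ t i = θ₂ i + w * (θh₂ T₁ i - θ₂ i)
  have hsol : θh₂ t i = θ₂ i + w * (θh₂ T₁ i - θ₂ i) := by
    have := congrArg (fun x => w * x) hk
    have h5 : w * (Real.exp (γ * V t) * (θh₂ t i - θ₂ i)) = θh₂ t i - θ₂ i := by
      rw [← mul_assoc, mul_comm w, hwV, one_mul]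
    rw [h5] at this
    linarith [this]
  have hne : (1 : ℝ) - w ≠ 0 := by
    have : 0 < w := Real.exp_pos _
    intro h; apply absurd hw1; linarith [h]
  simp only [Pi.smul_apply, Pi.sub_apply, smul_eq_mul]
  rw [hsol]
  field_simp
  ring
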